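/- arXiv:2002.07001 — 2 statements merged into one kernel-verified Lean document; each statement's English description precedes it below -/
import Mathlib

section
/- Let η(x) = (1+|x|^2)^ν with 0 < ν < α/2, 1 < α < 2, d ≥ 3. Let θ_n(s) = n θ(s/n) be truncations with θ ∈ C^2((0,∞)), θ(s) = s for 0 < s < 1, θ(s) = 2 for s > 2, and set η_n := θ_n(η). Then there is a constant C_0 < ∞, independent of n, such that |Δ η_n(x)| ≤ C_0 (1+|x|^2)^{ν-1} for all x ∈ ℝ^d. -/
open MeasureTheory

noncomputable section

/-- The Laplacian of `f : ℝ^d → ℝ`, `Δf(x) = ∑ i ∂²_i f(x)`. -/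
def lap (d : ℕ) (f : EuclideanSpace ℝ (Fin d) → ℝ) (x : EuclideanSpace ℝ (Fin d)) : ℝ :=
  ∑ i : Fin d,
    fderiv ℝ (fun y => fderiv ℝ f y (EuclideanSpace.single i (1 : ℝ))) x
      (EuclideanSpace.single i (1 : ℝ))


/-- β(t) = θ_n'(η) η' -type factor. -/
def auxβ (θ : ℝ → ℝ) (ν N t : ℝ) : ℝ :=
  ν * deriv θ ((1 + t) ^ ν / N) * (1 + t) ^ (ν - 1)

def auxβ' (θ : ℝ → ℝ) (ν N t : ℝ) : ℝ :=
  ν * (deriv (deriv θ) ((1 + t) ^ ν / N) * (ν * (1 + t) ^ (ν - 1) / N) * (1 + t) ^ (ν - 1)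
    + deriv θ ((1 + t) ^ ν / N) * ((ν - 1) * (1 + t) ^ (ν - 2)))

lemma aux_pow (p t : ℝ) (ht : 0 ≤ t) :
    HasDerivAt (fun t : ℝ => (1 + t) ^ p) (p * (1 + t) ^ (p - 1)) t := by
  have h1 : HasDerivAt (fun t : ℝ => 1 + t) 1 t := (hasDerivAt_id t).const_add 1
  have := h1.rpow_const (p := p) (Or.inl (by positivity))
  simpa using this

lemma aux_scalar (θ : ℝ → ℝ) (ν N t : ℝ) (hN : 0 < N) (ht : 0 ≤ t)
    (hθd : DifferentiableAt ℝ θ ((1 + t) ^ ν / N)) :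
    HasDerivAt (fun t : ℝ => N * θ ((1 + t) ^ ν / N)) (auxβ θ ν N t) t := by
  have hu : HasDerivAt (fun t : ℝ => (1 + t) ^ ν / N) (ν * (1 + t) ^ (ν - 1) / N) t :=
    (aux_pow ν t ht).div_const N
  have := ((hθd.hasDerivAt.comp t hu)).const_mul N
  refine HasDerivAt.congr_deriv this ?_
  unfold auxβ
  field_simp

lemma aux_beta_deriv (θ : ℝ → ℝ) (ν N t : ℝ) (hN : 0 < N) (ht : 0 ≤ t)
    (hθd2 : DifferentiableAt ℝ (deriv θ) ((1 + t) ^ ν / N)) :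
    HasDerivAt (fun s => auxβ θ ν N s) (auxβ' θ ν N t) t := by
  have hu : HasDerivAt (fun t : ℝ => (1 + t) ^ ν / N) (ν * (1 + t) ^ (ν - 1) / N) t :=
    (aux_pow ν t ht).div_const N
  have h1 : HasDerivAt (fun t : ℝ => deriv θ ((1 + t) ^ ν / N))
      (deriv (deriv θ) ((1 + t) ^ ν / N) * (ν * (1 + t) ^ (ν - 1) / N)) t :=
    by have := hθd2.hasDerivAt.comp t hu; exact this
  have h2 : HasDerivAt (fun t : ℝ => (1 + t) ^ (ν - 1)) ((ν - 1) * (1 + t) ^ (ν - 2)) t := by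
    have := aux_pow (ν - 1) t ht
    have he : ν - 1 - 1 = ν - 2 := by ring
    rwa [he] at this
  have := (h1.mul h2).const_mul ν
  have heq : (fun s => auxβ θ ν N s)
      = fun t : ℝ => ν * (deriv θ ((1 + t) ^ ν / N) * (1 + t) ^ (ν - 1)) := by
    funext s; unfold auxβ; ring
  rw [heq]
  exact this

lemma norm_sq_eq_sum {d : ℕ} (x : EuclideanSpace ℝ (Fin d)) :
    ‖x‖ ^ 2 = ∑ i : Fin d, x i ^ 2 := by
  rw [EuclideanSpace.norm_eq, Real.sq_sqrt (by positivity)]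
  simp [sq_abs]

lemma aux_fderiv {d : ℕ} (θ : ℝ → ℝ) (ν N : ℝ) (hN : 0 < N)
    (hθd : ∀ s : ℝ, 0 < s → DifferentiableAt ℝ θ s)
    (y : EuclideanSpace ℝ (Fin d)) :
    HasFDerivAt (fun y : EuclideanSpace ℝ (Fin d) => N * θ ((1 + ‖y‖ ^ 2) ^ ν / N))
      ((auxβ θ ν N (‖y‖ ^ 2)) • (2 • innerSL ℝ y)) y := by
  have ht : (0:ℝ) ≤ ‖y‖ ^ 2 := by positivity
  have hq : HasFDerivAt (fun y : EuclideanSpace ℝ (Fin d) => ‖y‖ ^ 2)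
      (2 • innerSL ℝ y) y := (hasStrictFDerivAt_norm_sq y).hasFDerivAt
  have hs := aux_scalar θ ν N (‖y‖ ^ 2) hN ht (hθd _ (by positivity))
  have := hs.comp_hasFDerivAt y hq; exact this

lemma aux_fderiv_apply {d : ℕ} (θ : ℝ → ℝ) (ν N : ℝ) (hN : 0 < N)
    (hθd : ∀ s : ℝ, 0 < s → DifferentiableAt ℝ θ s)
    (y : EuclideanSpace ℝ (Fin d)) (i : Fin d) :
    fderiv ℝ (fun y : EuclideanSpace ℝ (Fin d) => N * θ ((1 + ‖y‖ ^ 2) ^ ν / N)) y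
      (EuclideanSpace.single i (1 : ℝ))
      = auxβ θ ν N (‖y‖ ^ 2) * (2 * y i) := by
  rw [(aux_fderiv θ ν N hN hθd y).fderiv]
  simp [ContinuousLinearMap.smul_apply, real_inner_comm, two_smul, EuclideanSpace.inner_single_right]
  ring

lemma lap_eq {d : ℕ} (θ : ℝ → ℝ) (ν N : ℝ) (hN : 0 < N)
    (hθd : ∀ s : ℝ, 0 < s → DifferentiableAt ℝ θ s)
    (hθd2 : ∀ s : ℝ, 0 < s → DifferentiableAt ℝ (deriv θ) s)
    (x : EuclideanSpace ℝ (Fin d)) :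
    lap d (fun y => N * θ ((1 + ‖y‖ ^ 2) ^ ν / N)) x
      = 2 * d * auxβ θ ν N (‖x‖ ^ 2) + 4 * auxβ' θ ν N (‖x‖ ^ 2) * ‖x‖ ^ 2 := by
  have ht : (0:ℝ) ≤ ‖x‖ ^ 2 := by positivity
  have key : ∀ i : Fin d,
      fderiv ℝ (fun y => fderiv ℝ
          (fun y : EuclideanSpace ℝ (Fin d) => N * θ ((1 + ‖y‖ ^ 2) ^ ν / N)) y
          (EuclideanSpace.single i (1 : ℝ))) x (EuclideanSpace.single i (1 : ℝ))
      = 2 * auxβ θ ν N (‖x‖ ^ 2) + 4 * auxβ' θ ν N (‖x‖ ^ 2) * (x i) ^ 2 := by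
    intro i
    have hfun : (fun y => fderiv ℝ
          (fun y : EuclideanSpace ℝ (Fin d) => N * θ ((1 + ‖y‖ ^ 2) ^ ν / N)) y
          (EuclideanSpace.single i (1 : ℝ)))
        = fun y : EuclideanSpace ℝ (Fin d) => auxβ θ ν N (‖y‖ ^ 2) * (2 * y i) := by
      funext y; exact aux_fderiv_apply θ ν N hN hθd y i
    rw [hfun]
    have hq : HasFDerivAt (fun y : EuclideanSpace ℝ (Fin d) => ‖y‖ ^ 2)
        (2 • innerSL ℝ x) x := (hasStrictFDerivAt_norm_sq x).hasFDerivAt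
    have hA : HasFDerivAt (fun y : EuclideanSpace ℝ (Fin d) => auxβ θ ν N (‖y‖ ^ 2))
        ((auxβ' θ ν N (‖x‖ ^ 2)) • (2 • innerSL ℝ x)) x :=
      by have := (aux_beta_deriv θ ν N (‖x‖ ^ 2) hN ht (hθd2 _ (by positivity))).comp_hasFDerivAt x hq; exact this
    have hB : HasFDerivAt (fun y : EuclideanSpace ℝ (Fin d) => 2 * y i)
        ((2:ℝ) • (EuclideanSpace.proj i : EuclideanSpace ℝ (Fin d) →L[ℝ] ℝ)) x :=
      ((EuclideanSpace.proj i : EuclideanSpace ℝ (Fin d) →L[ℝ] ℝ).hasFDerivAt).const_mul (2:ℝ)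
    have hprod := hA.mul hB
    erw [hprod.fderiv]
    simp [ContinuousLinearMap.smul_apply, real_inner_comm, two_smul,
      EuclideanSpace.inner_single_right]
    ring
  unfold lap
  rw [Finset.sum_congr rfl (fun i _ => key i)]
  rw [Finset.sum_add_distrib, Finset.sum_const, Finset.card_univ]
  simp only [Fintype.card_fin, nsmul_eq_mul, ← Finset.mul_sum]
  rw [← norm_sq_eq_sum]
  ring

lemma deriv_theta_lo (θ : ℝ → ℝ) (hθ1 : ∀ s : ℝ, 0 < s → s < 1 → θ s = s) :
    ∀ s : ℝ, 0 < s → s < 1 → deriv θ s = 1 := by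
  intro s hs0 hs1
  have hmem : Set.Ioo (0:ℝ) 1 ∈ nhds s := isOpen_Ioo.mem_nhds ⟨hs0, hs1⟩
  have hev : θ =ᶠ[nhds s] id :=
    Filter.eventually_of_mem hmem (fun t ht => hθ1 t ht.1 ht.2)
  rw [hev.deriv_eq, deriv_id]

lemma deriv2_theta_lo (θ : ℝ → ℝ) (hθ1 : ∀ s : ℝ, 0 < s → s < 1 → θ s = s) :
    ∀ s : ℝ, 0 < s → s < 1 → deriv (deriv θ) s = 0 := by
  intro s hs0 hs1
  have hmem : Set.Ioo (0:ℝ) 1 ∈ nhds s := isOpen_Ioo.mem_nhds ⟨hs0, hs1⟩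
  have hev : deriv θ =ᶠ[nhds s] (fun _ => (1:ℝ)) :=
    Filter.eventually_of_mem hmem (fun t ht => deriv_theta_lo θ hθ1 t ht.1 ht.2)
  rw [hev.deriv_eq, deriv_const]

lemma deriv_theta_hi (θ : ℝ → ℝ) (hθ2 : ∀ s : ℝ, 2 < s → θ s = 2) :
    ∀ s : ℝ, 2 < s → deriv θ s = 0 := by
  intro s hs
  have hmem : Set.Ioi (2:ℝ) ∈ nhds s := isOpen_Ioi.mem_nhds hs
  have hev : θ =ᶠ[nhds s] (fun _ => (2:ℝ)) :=
    Filter.eventually_of_mem hmem (fun t ht => hθ2 t ht)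
  rw [hev.deriv_eq, deriv_const]

lemma deriv2_theta_hi (θ : ℝ → ℝ) (hθ2 : ∀ s : ℝ, 2 < s → θ s = 2) :
    ∀ s : ℝ, 2 < s → deriv (deriv θ) s = 0 := by
  intro s hs
  have hmem : Set.Ioi (2:ℝ) ∈ nhds s := isOpen_Ioi.mem_nhds hs
  have hev : deriv θ =ᶠ[nhds s] (fun _ => (0:ℝ)) :=
    Filter.eventually_of_mem hmem (fun t ht => deriv_theta_hi θ hθ2 t ht)
  rw [hev.deriv_eq, deriv_const]

set_option maxHeartbeats 2000000 in
theorem stmt8' (d : ℕ) (hd : 3 ≤ d) (α ν : ℝ) (hα1 : 1 < α) (hα2 : α < 2)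
    (hν1 : 0 < ν) (hν2 : ν < α / 2)
    (θ : ℝ → ℝ) (hθC2 : ContDiffOn ℝ 2 θ (Set.Ioi (0 : ℝ)))
    (hθ1 : ∀ s : ℝ, 0 < s → s < 1 → θ s = s)
    (hθ2 : ∀ s : ℝ, 2 < s → θ s = 2) :
    ∃ C : ℝ, 0 < C ∧ ∀ n : ℕ, 1 ≤ n → ∀ x : EuclideanSpace ℝ (Fin d),
      |lap d (fun y => (n : ℝ) * θ ((1 + ‖y‖ ^ 2) ^ ν / n)) x|
        ≤ C * (1 + ‖x‖ ^ 2) ^ (ν - 1) := by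
  -- differentiability of θ
  have hθd : ∀ s : ℝ, 0 < s → DifferentiableAt ℝ θ s := fun s hs =>
    (hθC2.contDiffAt (isOpen_Ioi.mem_nhds hs)).differentiableAt (by norm_num)
  have hC1 : ContDiffOn ℝ 1 (deriv θ) (Set.Ioi (0:ℝ)) :=
    hθC2.deriv_of_isOpen (m := 1) isOpen_Ioi (by norm_num)
  have hθd2 : ∀ s : ℝ, 0 < s → DifferentiableAt ℝ (deriv θ) s := fun s hs =>
    (hC1.contDiffAt (isOpen_Ioi.mem_nhds hs)).differentiableAt (by norm_num)
  have hcont2 : ContinuousOn (deriv (deriv θ)) (Set.Ioi (0:ℝ)) :=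
    (hC1.deriv_of_isOpen (m := 0) isOpen_Ioi (by norm_num)).continuousOn
  -- bounds on deriv θ and deriv (deriv θ)
  obtain ⟨c₁₀, hc₁₀⟩ := (isCompact_Icc (a := (1:ℝ)) (b := 2)).exists_bound_of_continuousOn
    (hC1.continuousOn.mono (fun s hs => lt_of_lt_of_le one_pos hs.1))
  obtain ⟨c₂₀, hc₂₀⟩ := (isCompact_Icc (a := (1:ℝ)) (b := 2)).exists_bound_of_continuousOn
    (hcont2.mono (fun s hs => lt_of_lt_of_le one_pos hs.1))
  set c₁ : ℝ := max c₁₀ 1 with hc₁def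
  set c₂ : ℝ := max c₂₀ 0 with hc₂def
  have hc₁1 : (1:ℝ) ≤ c₁ := le_max_right _ _
  have hc₁0 : (0:ℝ) ≤ c₁ := le_trans zero_le_one hc₁1
  have hc₂0 : (0:ℝ) ≤ c₂ := le_max_right _ _
  have hd1bound : ∀ s : ℝ, 0 < s → |deriv θ s| ≤ c₁ := by
    intro s hs
    rcases lt_or_ge s 1 with h | h
    · rw [deriv_theta_lo θ hθ1 s hs h]; simpa using hc₁1
    rcases le_or_gt s 2 with h2 | h2
    · exact le_trans (hc₁₀ s ⟨h, h2⟩) (le_max_left _ _)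
    · rw [deriv_theta_hi θ hθ2 s h2]; simpa using hc₁0
  have hd2bound : ∀ s : ℝ, 1 ≤ s → s ≤ 2 → |deriv (deriv θ) s| ≤ c₂ := by
    intro s h1 h2
    exact le_trans (hc₂₀ s ⟨h1, h2⟩) (le_max_left _ _)
  have hd2zero : ∀ s : ℝ, 0 < s → (s < 1 ∨ 2 < s) → deriv (deriv θ) s = 0 := by
    intro s hs h
    rcases h with h | h
    · exact deriv2_theta_lo θ hθ1 s hs h
    · exact deriv2_theta_hi θ hθ2 s h
  refine ⟨2*d*(ν*c₁) + 4*(2*ν^2*c₂ + ν * |ν - 1| * c₁) + 1, ?_, ?_⟩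
  · have h1 : 0 ≤ 2*(d:ℝ)*(ν*c₁) :=
      mul_nonneg (mul_nonneg (by norm_num) (Nat.cast_nonneg d)) (mul_nonneg hν1.le hc₁0)
    have h2 : 0 ≤ 2*ν^2*c₂ := mul_nonneg (mul_nonneg (by norm_num) (sq_nonneg ν)) hc₂0
    have h3 : 0 ≤ ν * |ν - 1| * c₁ := mul_nonneg (mul_nonneg hν1.le (abs_nonneg _)) hc₁0
    nlinarith
  intro n hn x
  set N : ℝ := (n : ℝ) with hNdef
  have hNpos : 0 < N := by
    simp only [hNdef]; exact_mod_cast Nat.lt_of_lt_of_le Nat.zero_lt_one hn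
  rw [lap_eq θ ν N hNpos hθd hθd2 x]
  set t : ℝ := ‖x‖ ^ 2 with htdef
  have ht : 0 ≤ t := by positivity
  set s : ℝ := 1 + t with hsdef
  have hs1 : (1:ℝ) ≤ s := by rw [hsdef]; linarith
  have hspos : (0:ℝ) < s := lt_of_lt_of_le one_pos hs1
  have hts : t ≤ s := by rw [hsdef]; linarith
  set A : ℝ := s ^ (ν - 1) with hAdef
  set B : ℝ := s ^ ν with hBdef
  have hA : 0 < A := Real.rpow_pos_of_pos hspos _
  have hB : 0 < B := Real.rpow_pos_of_pos hspos _
  have hAB : A * s = B := by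
    have h : s ^ (ν - 1) * s ^ (1:ℝ) = s ^ ν := by
      rw [← Real.rpow_add hspos]; norm_num
    rw [hAdef, hBdef]
    simpa [Real.rpow_one] using h
  set u : ℝ := B / N with hudef
  have hupos : 0 < u := div_pos hB hNpos
  have hBu : B = N * u := by rw [hudef]; field_simp
  -- the second-derivative term with truncation support
  have hT : |deriv (deriv θ) u| * B ≤ 2 * c₂ * N := by
    rcases lt_or_ge u 1 with h | h
    · rw [hd2zero u hupos (Or.inl h)]
      simp
      positivity
    rcases le_or_gt u 2 with h2 | h2
    · have hb1 := hd2bound u h h2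
      have hB2 : B ≤ 2 * N := by rw [hBu]; nlinarith
      calc |deriv (deriv θ) u| * B ≤ c₂ * (2*N) :=
            mul_le_mul hb1 hB2 hB.le hc₂0
        _ = 2 * c₂ * N := by ring
    · rw [hd2zero u hupos (Or.inr h2)]
      simp
      positivity
  -- now the estimates
  have hD1 : |deriv θ u| ≤ c₁ := hd1bound u hupos
  set D1 : ℝ := deriv θ u with hD1def
  set D2 : ℝ := deriv (deriv θ) u with hD2def
  have hβval : auxβ θ ν N t = ν * D1 * A := by
    rw [auxβ, hD1def, hudef, hBdef, hAdef, hsdef]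
  have hβ'val : auxβ' θ ν N t = ν * (D2 * (ν * A / N) * A + D1 * ((ν-1) * (A/s))) := by
    rw [auxβ', hD1def, hD2def, hudef, hBdef, hAdef, hsdef]
    congr 2
    rw [show ν - 2 = (ν - 1) - 1 by ring, Real.rpow_sub hspos, Real.rpow_one]
  rw [hβval, hβ'val]
  -- bound term by term
  have h1 : |ν * D1 * A| ≤ ν * c₁ * A := by
    rw [abs_mul, abs_mul, abs_of_pos hν1, abs_of_pos hA]
    have : ν * |D1| ≤ ν * c₁ := mul_le_mul_of_nonneg_left hD1 hν1.le
    nlinarith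
  have h2 : |ν * (D2 * (ν * A / N) * A + D1 * ((ν-1) * (A/s)))| * t
      ≤ 2*ν^2*c₂*A + ν * |ν - 1| * c₁*A := by
    have e1 : |ν * (D2 * (ν * A / N) * A + D1 * ((ν-1) * (A/s)))|
        ≤ ν * (|D2| * (ν * A / N) * A + c₁ * (|ν-1| * (A/s))) := by
      rw [abs_mul, abs_of_pos hν1]
      refine mul_le_mul_of_nonneg_left ?_ hν1.le
      calc |D2 * (ν * A / N) * A + D1 * ((ν-1) * (A/s))|
          ≤ |D2 * (ν * A / N) * A| + |D1 * ((ν-1) * (A/s))| := abs_add_le _ _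
        _ = |D2| * (ν * A / N) * A + |D1| * (|ν-1| * (A/s)) := by
            rw [abs_mul, abs_mul, abs_mul, abs_mul, abs_of_pos hA,
              abs_of_pos (by positivity : (0:ℝ) < ν * A / N),
              abs_of_pos (by positivity : (0:ℝ) < A/s)]
        _ ≤ |D2| * (ν * A / N) * A + c₁ * (|ν-1| * (A/s)) := by
            have : |D1| * (|ν-1| * (A/s)) ≤ c₁ * (|ν-1| * (A/s)) :=
              mul_le_mul_of_nonneg_right hD1 (by positivity)
            linarith
    have e2 : |ν * (D2 * (ν * A / N) * A + D1 * ((ν-1) * (A/s)))| * t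
        ≤ ν * (|D2| * (ν * A / N) * A + c₁ * (|ν-1| * (A/s))) * s := by
      refine mul_le_mul e1 hts ht ?_
      have : (0:ℝ) ≤ |D2| * (ν * A / N) * A := by positivity
      have : (0:ℝ) ≤ c₁ * (|ν-1| * (A/s)) := by positivity
      positivity
    have e3 : ν * (|D2| * (ν * A / N) * A + c₁ * (|ν-1| * (A/s))) * s
        = ν^2 * A * (|D2| * (A * s)) / N + ν * |ν-1| * c₁ * (A / s * s) := by ring
    rw [hAB, div_mul_cancel₀ A hspos.ne'] at e3
    have e4 : ν^2 * A * (|D2| * B) / N ≤ 2*ν^2*c₂*A := by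
      rw [div_le_iff₀ hNpos]
      calc ν^2 * A * (|D2| * B) ≤ ν^2 * A * (2*c₂*N) :=
            mul_le_mul_of_nonneg_left hT (by positivity)
        _ = 2*ν^2*c₂*A*N := by ring
    calc |ν * (D2 * (ν * A / N) * A + D1 * ((ν-1) * (A/s)))| * t
        ≤ ν * (|D2| * (ν * A / N) * A + c₁ * (|ν-1| * (A/s))) * s := e2
      _ = ν^2 * A * (|D2| * B) / N + ν * |ν-1| * c₁ * A := e3
      _ ≤ 2*ν^2*c₂*A + ν * |ν - 1| * c₁*A := by linarith
  -- assemble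
  have hdnn : (0:ℝ) ≤ (d:ℝ) := Nat.cast_nonneg d
  calc |2 * d * (ν * D1 * A) + 4 * (ν * (D2 * (ν * A / N) * A + D1 * ((ν-1) * (A/s)))) * t|
      ≤ |2 * d * (ν * D1 * A)| + |4 * (ν * (D2 * (ν * A / N) * A + D1 * ((ν-1) * (A/s)))) * t| :=
        abs_add_le _ _
    _ = 2 * d * |ν * D1 * A|
        + 4 * (|ν * (D2 * (ν * A / N) * A + D1 * ((ν-1) * (A/s)))| * t) := by
        simp only [abs_mul, abs_of_nonneg ht, abs_of_nonneg hdnn,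
          abs_of_nonneg (by norm_num : (0:ℝ) ≤ 2), abs_of_nonneg (by norm_num : (0:ℝ) ≤ 4)]
        ring
    _ ≤ 2 * d * (ν * c₁ * A) + 4 * (2*ν^2*c₂*A + ν * |ν - 1| * c₁*A) := by
        have := mul_le_mul_of_nonneg_left h1 (by positivity : (0:ℝ) ≤ 2*d)
        have := mul_le_mul_of_nonneg_left h2 (by norm_num : (0:ℝ) ≤ 4)
        linarith
    _ ≤ (2*d*(ν*c₁) + 4*(2*ν^2*c₂ + ν * |ν - 1| * c₁) + 1) * A := by nlinarith

/-- Let `η(x) = (1+|x|²)^ν`, `0 < ν < α/2`, `1 < α < 2`, `d ≥ 3`, and let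
`η_n = θ_n(η)` with `θ_n(s) = n θ(s/n)`, where `θ ∈ C²((0,∞))`, `θ(s) = s` on `(0,1)` and
`θ(s) = 2` on `(2,∞)`.  Then there is a constant `C₀ < ∞`, independent of `n`, with
`|Δ η_n(x)| ≤ C₀ (1+|x|²)^{ν-1}` for all `x`. -/
theorem stmt8 (d : ℕ) (hd : 3 ≤ d) (α ν : ℝ) (hα1 : 1 < α) (hα2 : α < 2)
    (hν1 : 0 < ν) (hν2 : ν < α / 2)
    (θ : ℝ → ℝ) (hθC2 : ContDiffOn ℝ 2 θ (Set.Ioi (0 : ℝ)))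
    (hθ1 : ∀ s : ℝ, 0 < s → s < 1 → θ s = s)
    (hθ2 : ∀ s : ℝ, 2 < s → θ s = 2) :
    ∃ C : ℝ, 0 < C ∧ ∀ n : ℕ, 1 ≤ n → ∀ x : EuclideanSpace ℝ (Fin d),
      |lap d (fun y => (n : ℝ) * θ ((1 + ‖y‖ ^ 2) ^ ν / n)) x|
        ≤ C * (1 + ‖x‖ ^ 2) ^ (ν - 1) :=
  stmt8' d hd α ν hα1 hα2 hν1 hν2 θ hθC2 hθ1 hθ2

end
end

section
/- Let d ≥ 3, 1 < α < 2, and suppose (1+A)^{-τ}(x,y) ≤ c(|x-y|^{-d+ατ} ∧ |x-y|^{-d-α}) for A = (-Δ)^{α/2}, 0 < τ < 1. Let η(x) = (1+|x|^2)^ν, 0 < ν < α/2. Then the 'far' part S_2(x) := η(x)^{-1} ∫_{B^c(x,1)} |x-y|^{-d-α} η(y)|h(y)| dy satisfies, for p > d/(2ν)+2 and p > d-α+1, the bound ‖S_2‖_∞ ≤ C ‖η^{2/p} h‖_{L^p} for all h ∈ C_c(ℝ^d). -/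
open MeasureTheory

noncomputable section

private lemma memLp_of_integrable_rpow {α : Type*} [MeasurableSpace α] {μ : Measure α}
    {f : α → ℝ} {q : ℝ} (hq : 0 < q) (hf0 : ∀ x, 0 ≤ f x)
    (hm : AEStronglyMeasurable f μ) (hi : Integrable (fun x => f x ^ q) μ) :
    MemLp f (ENNReal.ofReal q) μ := by
  have hq0 : (ENNReal.ofReal q) ≠ 0 := by
    simp [ENNReal.ofReal_eq_zero, not_le, hq]
  have hqt : (ENNReal.ofReal q) ≠ ⊤ := ENNReal.ofReal_ne_top
  rw [← memLp_norm_rpow_iff hm hq0 hqt]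
  have heq : (fun x => ‖f x‖ ^ (ENNReal.ofReal q).toReal) = fun x => f x ^ q := by
    funext x
    rw [Real.norm_of_nonneg (hf0 x), ENNReal.toReal_ofReal hq.le]
  rw [heq, ENNReal.div_self hq0 hqt, memLp_one_iff_integrable]
  exact hi

set_option maxHeartbeats 1000000 in
/-- Let `d ≥ 3`, `1 < α < 2`, `A = (-Δ)^{α/2}` with kernel bound
`(1+A)^{-τ}(x,y) ≤ c(|x-y|^{-d+ατ} ∧ |x-y|^{-d-α})`, `0 < τ < 1`, and `η(x) = (1+|x|²)^ν`,
`0 < ν < α/2`.  Then for `p > d/(2ν)+2` and `p > d-α+1` the 'far' part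
`S₂(x) = η(x)^{-1} ∫_{B^c(x,1)} |x-y|^{-d-α} η(y)|h(y)| dy` satisfies
`‖S₂‖_∞ ≤ C ‖η^{2/p} h‖_{L^p}` for all `h ∈ C_c(ℝ^d)`. -/
theorem stmt17 (d : ℕ) (hd : 3 ≤ d) (α ν p τ : ℝ)
    (hα1 : 1 < α) (hα2 : α < 2) (hν1 : 0 < ν) (hν2 : ν < α / 2)
    (hτ1 : 0 < τ) (hτ2 : τ < 1)
    (hp1 : (d : ℝ) / (2 * ν) + 2 < p) (hp2 : (d : ℝ) - α + 1 < p)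
    (c : ℝ) (hc : 0 < c)
    (k : EuclideanSpace ℝ (Fin d) → EuclideanSpace ℝ (Fin d) → ℝ)
    (hk : ∀ x y : EuclideanSpace ℝ (Fin d), x ≠ y →
      k x y ≤ c * min (‖x - y‖ ^ (-(d : ℝ) + α * τ)) (‖x - y‖ ^ (-(d : ℝ) - α))) :
    ∃ C : ℝ, 0 < C ∧ ∀ h : EuclideanSpace ℝ (Fin d) → ℝ,
      Continuous h → HasCompactSupport h → ∀ x : EuclideanSpace ℝ (Fin d),
        (1 + ‖x‖ ^ 2) ^ (-ν) *
            ∫ y in {y : EuclideanSpace ℝ (Fin d) | 1 ≤ dist x y},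
              ‖x - y‖ ^ (-(d : ℝ) - α) * ((1 + ‖y‖ ^ 2) ^ ν * |h y|)
          ≤ C * (∫ y, ((1 + ‖y‖ ^ 2) ^ (ν * (2 / p)) * |h y|) ^ p) ^ (1 / p) := by
  have hd0 : (0:ℝ) < d := by
    have : (3:ℝ) ≤ (d:ℝ) := by exact_mod_cast hd
    linarith
  have h2ν : 2 * ν < α := by linarith
  have hp1' : (1 : ℝ) < p := by
    have : (0:ℝ) ≤ (d:ℝ) / (2*ν) := div_nonneg hd0.le (by linarith)
    linarith
  have hp0 : 0 < p := by linarith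
  set q : ℝ := p.conjExponent with hqdef
  have hpq : p.HolderConjugate q := Real.HolderConjugate.conjExponent hp1'
  have hqp : q.HolderConjugate p := hpq.symm
  have hq1 : 1 < q := hqp.lt
  have hq0 : 0 < q := hqp.pos
  set r : ℝ := ((d:ℝ) + α - 2*ν) * q with hrdef
  have hdr : (d:ℝ) < r := by
    have h1 : (d:ℝ) ≤ (d:ℝ) * q := le_mul_of_one_le_right hd0.le hq1.le
    have h2 : (d:ℝ) * q < ((d:ℝ) + α - 2*ν) * q :=
      mul_lt_mul_of_pos_right (by linarith) hq0
    linarith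
  have hr0 : 0 < r := lt_trans hd0 hdr
  have hfr : (Module.finrank ℝ (EuclideanSpace ℝ (Fin d)) : ℝ) < r := by
    rw [finrank_euclideanSpace_fin]; exact hdr
  have hIint : Integrable (fun z : EuclideanSpace ℝ (Fin d) => (1 + ‖z‖) ^ (-r)) :=
    integrable_one_add_norm hfr
  set I : ℝ := ∫ z : EuclideanSpace ℝ (Fin d), (1 + ‖z‖) ^ (-r) with hIdef
  have hI0 : 0 ≤ I := integral_nonneg fun z => Real.rpow_nonneg (by positivity) _
  set C0 : ℝ := (4:ℝ) ^ ν * ((2:ℝ) ^ r * I) ^ (1/q) with hC0def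
  have hC00 : 0 ≤ C0 := by positivity
  refine ⟨C0 + 1, by positivity, ?_⟩
  intro h hcont hsupp x
  set S : Set (EuclideanSpace ℝ (Fin d)) := {y | 1 ≤ dist x y} with hSdef
  have hSmeas : MeasurableSet S :=
    (isClosed_le continuous_const (continuous_const.dist continuous_id)).measurableSet
  set G : EuclideanSpace ℝ (Fin d) → ℝ :=
    fun y => (1 + ‖y‖ ^ 2) ^ (ν * (2 / p)) * |h y| with hGdef
  set F : EuclideanSpace ℝ (Fin d) → ℝ :=
    fun y => ‖x - y‖ ^ (2*ν - (d:ℝ) - α) with hFdef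
  have hG0 : ∀ y, 0 ≤ G y := fun y => by
    rw [hGdef]; positivity
  have hF0 : ∀ y, 0 ≤ F y := fun y => by
    rw [hFdef]; exact Real.rpow_nonneg (norm_nonneg _) _
  have hGcont : Continuous G := by
    rw [hGdef]
    exact ((continuous_const.add ((continuous_norm).pow 2)).rpow_const
      (fun y => Or.inl (by positivity : (0:ℝ) < 1 + ‖y‖ ^ 2).ne')).mul hcont.abs
  have hGsupp : HasCompactSupport G := by
    rw [hGdef]
    exact HasCompactSupport.mul_left (hsupp.comp_left (g := fun t : ℝ => |t|) abs_zero)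
  have hGmem : MemLp G (ENNReal.ofReal p) (volume.restrict S) :=
    (hGcont.memLp_of_hasCompactSupport hGsupp).restrict S
  have hFmeas : Measurable F := by
    rw [hFdef]; fun_prop
  have hmemS : ∀ y ∈ S, (1:ℝ) ≤ ‖x - y‖ := by
    intro y hy
    rw [hSdef, Set.mem_setOf_eq, dist_eq_norm] at hy
    exact hy
  have hFq : ∀ y, F y ^ q = ‖x - y‖ ^ (-r) := by
    intro y
    rw [hFdef]
    rw [← Real.rpow_mul (norm_nonneg _)]
    congr 1
    rw [hrdef]; ring
  -- elementary scalar bound on the exterior of the unit ball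
  have hkey : ∀ t : ℝ, 1 ≤ t → t ^ (-r) ≤ 2 ^ r * (1 + t) ^ (-r) := by
    intro t ht
    have ht0 : (0:ℝ) < t := by linarith
    have h1 : (1 + t) ≤ 2 * t := by linarith
    have h2 : ((2:ℝ)*t) ^ (-r) ≤ (1+t) ^ (-r) :=
      Real.rpow_le_rpow_of_nonpos (by linarith) h1 (by linarith)
    rw [Real.mul_rpow (by norm_num) ht0.le] at h2
    have h3 : (2:ℝ)^r * ((2:ℝ)^(-r) * t^(-r)) ≤ 2^r * (1+t)^(-r) :=
      mul_le_mul_of_nonneg_left h2 (by positivity)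
    calc t ^ (-r) = (2:ℝ)^r * ((2:ℝ)^(-r) * t^(-r)) := by
          rw [← mul_assoc, ← Real.rpow_add (by norm_num : (0:ℝ) < 2)]
          simp
      _ ≤ 2^r * (1+t)^(-r) := h3
  have hgfull : Integrable (fun y : EuclideanSpace ℝ (Fin d) => (1 + ‖x - y‖) ^ (-r)) :=
    hIint.comp_sub_left x
  have hFq_int : Integrable (fun y => ‖x - y‖ ^ (-r)) (volume.restrict S) := by
    refine Integrable.mono' ((hgfull.const_mul ((2:ℝ)^r)).restrict) ?_ ?_
    · apply Measurable.aestronglyMeasurable; fun_prop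
    · rw [ae_restrict_iff' hSmeas]
      filter_upwards with y hy
      rw [Real.norm_of_nonneg (Real.rpow_nonneg (norm_nonneg _) _)]
      exact hkey _ (hmemS y hy)
  have hFmem : MemLp F (ENNReal.ofReal q) (volume.restrict S) := by
    refine memLp_of_integrable_rpow hq0 hF0 hFmeas.aestronglyMeasurable ?_
    have heq : (fun y => F y ^ q) = fun y => ‖x - y‖ ^ (-r) := funext hFq
    rw [heq]; exact hFq_int
  have hFqbound : ∫ y in S, F y ^ q ≤ 2 ^ r * I := by
    have e : ∫ y in S, F y ^ q = ∫ y in S, ‖x - y‖ ^ (-r) := by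
      simp only [hFq]
    rw [e]
    have step1 : ∫ y in S, ‖x - y‖ ^ (-r) ≤ ∫ y in S, (2:ℝ)^r * (1 + ‖x - y‖) ^ (-r) := by
      refine integral_mono_of_nonneg ?_ ((hgfull.const_mul _).restrict) ?_
      · exact Filter.Eventually.of_forall fun y => Real.rpow_nonneg (norm_nonneg _) _
      · filter_upwards [ae_restrict_mem hSmeas] with y hy
        exact hkey _ (hmemS y hy)
    have step2 : ∫ y in S, (2:ℝ)^r * (1 + ‖x - y‖) ^ (-r)
        ≤ ∫ y, (2:ℝ)^r * (1 + ‖x - y‖) ^ (-r) := by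
      refine setIntegral_le_integral (hgfull.const_mul _) ?_
      exact Filter.Eventually.of_forall fun y => by positivity
    have step3 : (∫ y, (2:ℝ)^r * (1 + ‖x - y‖) ^ (-r)) = 2^r * I := by
      rw [integral_const_mul]
      rw [hIdef]
      congr 1
      exact integral_sub_left_eq_self (fun z => (1 + ‖z‖) ^ (-r)) volume x
    linarith
  have hHolder : ∫ y in S, F y * G y
      ≤ (∫ y in S, F y ^ q) ^ (1/q) * (∫ y in S, G y ^ p) ^ (1/p) :=
    integral_mul_le_Lp_mul_Lq_of_nonneg hqp
      (Filter.Eventually.of_forall hF0) (Filter.Eventually.of_forall hG0) hFmem hGmem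
  have hGp_cont : Continuous (fun y => G y ^ p) := hGcont.rpow_const fun y => Or.inr hp0.le
  have hGp_supp : HasCompactSupport (fun y => G y ^ p) :=
    hGsupp.comp_left (g := fun t : ℝ => t ^ p) (Real.zero_rpow (ne_of_gt hp0))
  have hGp_int : Integrable (fun y => G y ^ p) :=
    hGp_cont.integrable_of_hasCompactSupport hGp_supp
  have hGp_nonneg : ∀ y, 0 ≤ G y ^ p := fun y => Real.rpow_nonneg (hG0 y) _
  have hGbound : (∫ y in S, G y ^ p) ^ (1/p) ≤ (∫ y, G y ^ p) ^ (1/p) :=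
    Real.rpow_le_rpow (integral_nonneg fun y => hGp_nonneg y)
      (setIntegral_le_integral hGp_int (Filter.Eventually.of_forall hGp_nonneg))
      (by positivity)
  -- pointwise bound on S
  have hpt : ∀ y ∈ S,
      (1 + ‖x‖ ^ 2) ^ (-ν) * (‖x - y‖ ^ (-(d:ℝ) - α) * ((1 + ‖y‖ ^ 2) ^ ν * |h y|))
        ≤ (4:ℝ) ^ ν * (F y * G y) := by
    intro y hy
    have ht1 : (1:ℝ) ≤ ‖x - y‖ := hmemS y hy
    have ht0 : (0:ℝ) < ‖x - y‖ := by linarith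
    have hxnorm : ‖y‖ ≤ ‖x‖ + ‖x - y‖ := by
      have h1 : ‖y‖ - ‖x‖ ≤ ‖y - x‖ := norm_sub_norm_le y x
      rw [norm_sub_rev] at h1
      linarith
    have ha0 : (0:ℝ) < 1 + ‖x‖^2 := by positivity
    have hb1 : (1:ℝ) ≤ 1 + ‖y‖^2 := le_add_of_nonneg_right (sq_nonneg _)
    have ht2 : (1:ℝ) ≤ ‖x - y‖^2 := by nlinarith [ht1]
    have hw2 : ‖y‖^2 ≤ (‖x‖ + ‖x - y‖)^2 := by
      nlinarith [hxnorm, norm_nonneg y, norm_nonneg x, ht0.le]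
    have hb4 : 1 + ‖y‖^2 ≤ 4 * (1 + ‖x‖^2) * ‖x - y‖^2 := by
      nlinarith [ht2, hw2, sq_nonneg (‖x‖ * ‖x - y‖ - 1),
        mul_nonneg (sq_nonneg ‖x‖) (by linarith : (0:ℝ) ≤ ‖x - y‖^2 - 1)]
    have hsq : ((‖x - y‖^2 : ℝ))^ν = ‖x - y‖^(2*ν) := by
      rw [← Real.rpow_natCast ‖x - y‖ 2, ← Real.rpow_mul ht0.le]
      norm_num
    have hbν : (1 + ‖y‖^2)^ν ≤ (4:ℝ)^ν * (1 + ‖x‖^2)^ν * ‖x - y‖^(2*ν) := by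
      have h1 : (1 + ‖y‖^2)^ν ≤ (4 * (1 + ‖x‖^2) * ‖x - y‖^2)^ν :=
        Real.rpow_le_rpow (by positivity) hb4 hν1.le
      rw [Real.mul_rpow (by positivity) (by positivity),
        Real.mul_rpow (by norm_num) ha0.le, hsq] at h1
      exact h1
    have hinv : (1 + ‖x‖^2)^ν * (1 + ‖x‖^2)^(-ν) = 1 := by
      rw [← Real.rpow_add ha0]; simp
    have key1 : (1 + ‖y‖^2)^ν * (1 + ‖x‖^2)^(-ν) ≤ (4:ℝ)^ν * ‖x - y‖^(2*ν) := by
      calc (1 + ‖y‖^2)^ν * (1 + ‖x‖^2)^(-ν)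
          ≤ ((4:ℝ)^ν * (1 + ‖x‖^2)^ν * ‖x - y‖^(2*ν)) * (1 + ‖x‖^2)^(-ν) :=
            mul_le_mul_of_nonneg_right hbν (Real.rpow_nonneg ha0.le _)
        _ = (4:ℝ)^ν * ‖x - y‖^(2*ν) * ((1 + ‖x‖^2)^ν * (1 + ‖x‖^2)^(-ν)) := by ring
        _ = (4:ℝ)^ν * ‖x - y‖^(2*ν) := by rw [hinv, mul_one]
    have e3 : ‖x - y‖^(2*ν) * ‖x - y‖^(-(d:ℝ) - α) = ‖x - y‖^(2*ν - (d:ℝ) - α) := by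
      rw [← Real.rpow_add ht0]
      congr 1; ring
    have hone : (1:ℝ) ≤ (1 + ‖y‖^2)^(ν * (2/p)) :=
      Real.one_le_rpow hb1 (by positivity)
    calc (1 + ‖x‖ ^ 2) ^ (-ν) * (‖x - y‖ ^ (-(d:ℝ) - α) * ((1 + ‖y‖ ^ 2) ^ ν * |h y|))
        = ((1 + ‖y‖^2)^ν * (1 + ‖x‖^2)^(-ν)) * (‖x - y‖ ^ (-(d:ℝ) - α) * |h y|) := by
          ring
      _ ≤ ((4:ℝ)^ν * ‖x - y‖^(2*ν)) * (‖x - y‖ ^ (-(d:ℝ) - α) * |h y|) := by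
          apply mul_le_mul_of_nonneg_right key1
          exact mul_nonneg (Real.rpow_nonneg (norm_nonneg _) _) (abs_nonneg _)
      _ = (4:ℝ)^ν * (‖x - y‖^(2*ν - (d:ℝ) - α) * |h y|) := by
          rw [← e3]; ring
      _ ≤ (4:ℝ)^ν * (‖x - y‖^(2*ν - (d:ℝ) - α) * ((1 + ‖y‖^2)^(ν*(2/p)) * |h y|)) := by
          apply mul_le_mul_of_nonneg_left _ (by positivity)
          apply mul_le_mul_of_nonneg_left _ (Real.rpow_nonneg ht0.le _)
          exact le_mul_of_one_le_left (abs_nonneg _) hone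
      _ = (4:ℝ)^ν * (F y * G y) := by rw [hFdef, hGdef]
  -- integrability of the Hölder product
  have hGint : Integrable G := hGcont.integrable_of_hasCompactSupport hGsupp
  have hFG_int : Integrable (fun y => (4:ℝ)^ν * (F y * G y)) (volume.restrict S) := by
    refine Integrable.mono' ((hGint.const_mul ((4:ℝ)^ν)).restrict) ?_ ?_
    · exact ((hFmeas.mul hGcont.measurable).const_mul _).aestronglyMeasurable
    · rw [ae_restrict_iff' hSmeas]
      filter_upwards with y hy
      have hF1 : F y ≤ 1 := by
        rw [hFdef]
        apply Real.rpow_le_one_of_one_le_of_nonpos (hmemS y hy)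
        linarith
      rw [Real.norm_of_nonneg
        (mul_nonneg (by positivity) (mul_nonneg (hF0 y) (hG0 y)))]
      calc (4:ℝ)^ν * (F y * G y) ≤ (4:ℝ)^ν * (1 * G y) := by
            apply mul_le_mul_of_nonneg_left _ (by positivity)
            exact mul_le_mul_of_nonneg_right hF1 (hG0 y)
        _ = (4:ℝ)^ν * G y := by ring
  -- main chain
  calc (1 + ‖x‖ ^ 2) ^ (-ν) *
        ∫ y in S, ‖x - y‖ ^ (-(d:ℝ) - α) * ((1 + ‖y‖ ^ 2) ^ ν * |h y|)
      = ∫ y in S, (1 + ‖x‖ ^ 2) ^ (-ν) *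
          (‖x - y‖ ^ (-(d:ℝ) - α) * ((1 + ‖y‖ ^ 2) ^ ν * |h y|)) :=
        (integral_const_mul _ _).symm
    _ ≤ ∫ y in S, (4:ℝ)^ν * (F y * G y) := by
        refine integral_mono_of_nonneg ?_ hFG_int ?_
        · exact Filter.Eventually.of_forall fun y => by positivity
        · filter_upwards [ae_restrict_mem hSmeas] with y hy
          exact hpt y hy
    _ = (4:ℝ)^ν * ∫ y in S, F y * G y := integral_const_mul _ _
    _ ≤ (4:ℝ)^ν * ((∫ y in S, F y ^ q) ^ (1/q) * (∫ y in S, G y ^ p) ^ (1/p)) :=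
        mul_le_mul_of_nonneg_left hHolder (by positivity)
    _ ≤ (4:ℝ)^ν * (((2:ℝ)^r * I) ^ (1/q) * (∫ y, G y ^ p) ^ (1/p)) := by
        apply mul_le_mul_of_nonneg_left _ (by positivity)
        apply mul_le_mul
        · exact Real.rpow_le_rpow
            (integral_nonneg fun y => Real.rpow_nonneg (hF0 y) _) hFqbound (by positivity)
        · exact hGbound
        · exact Real.rpow_nonneg (integral_nonneg fun y => hGp_nonneg y) _
        · exact Real.rpow_nonneg (by positivity) _
    _ = C0 * (∫ y, G y ^ p) ^ (1/p) := by rw [hC0def]; ring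
    _ ≤ (C0 + 1) * (∫ y, G y ^ p) ^ (1/p) := by
        apply mul_le_mul_of_nonneg_right (by linarith)
        exact Real.rpow_nonneg (integral_nonneg fun y => hGp_nonneg y) _

end
end
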